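/- Suppose the nonnegative sequence p(n) satisfies sum_{n>=0} p(n) e^{-sn} ~ p/s as s -> 0+ for a constant p > 0, and set S(n) = sum_{j=0}^{n} p(j). Then S(n)/n converges to p as n -> infinity. -/

import Mathlib

open Filter Set

-- summability with bounded weight
lemma summable_weight (p : ℕ → ℝ) (hnonneg : ∀ n, 0 ≤ p n)
    (hsummable : ∀ s : ℝ, 0 < s → Summable (fun n : ℕ => p n * Real.exp (-s * n)))
    (g : ℝ → ℝ) (M : ℝ) (hM : ∀ x ∈ Icc (0:ℝ) 1, |g x| ≤ M) (s : ℝ) (hs : 0 < s) :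
    Summable (fun n : ℕ => p n * Real.exp (-s * n) * g (Real.exp (-s * n))) := by
  have hmem : ∀ n : ℕ, Real.exp (-s * n) ∈ Icc (0:ℝ) 1 := by
    intro n
    have h0 : 0 ≤ s * n := mul_nonneg hs.le (Nat.cast_nonneg n)
    constructor
    · exact (Real.exp_pos _).le
    · exact Real.exp_le_one_iff.mpr (by linarith)
  apply Summable.of_norm_bounded (((hsummable s hs)).mul_right M)
  intro n
  have h1 : 0 ≤ p n * Real.exp (-s * n) := mul_nonneg (hnonneg n) (Real.exp_pos _).le
  calc ‖p n * Real.exp (-s * n) * g (Real.exp (-s * n))‖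
      = p n * Real.exp (-s * n) * |g (Real.exp (-s * n))| := by
        rw [Real.norm_eq_abs, abs_mul, abs_of_nonneg h1]
    _ ≤ p n * Real.exp (-s * n) * M := by
        exact mul_le_mul_of_nonneg_left (hM _ (hmem n)) h1

lemma tendsto_scale (k : ℝ) (hk : 0 < k) :
    Tendsto (fun s : ℝ => k * s) (nhdsWithin 0 (Ioi 0)) (nhdsWithin 0 (Ioi 0)) := by
  rw [tendsto_nhdsWithin_iff]
  constructor
  · have h : Tendsto (fun s : ℝ => k * s) (nhds (0:ℝ)) (nhds (k * 0)) :=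
      (continuous_const.mul continuous_id).tendsto' 0 (k * 0) (by simp)
    rw [mul_zero] at h
    exact h.mono_left nhdsWithin_le_nhds
  · filter_upwards [self_mem_nhdsWithin] with s hs
    exact mul_pos hk hs

-- monomial case
lemma monomial_case (p : ℕ → ℝ) (P : ℝ)
    (hLaplace :
      Tendsto (fun s : ℝ => s * ∑' n : ℕ, p n * Real.exp (-s * n))
        (nhdsWithin 0 (Ioi 0)) (nhds P)) (k : ℕ) :
    Tendsto (fun s : ℝ => s * ∑' n : ℕ, p n * Real.exp (-s * n) * (Real.exp (-s * n))^k)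
      (nhdsWithin 0 (Ioi 0)) (nhds (P / (k + 1))) := by
  have hk : (0:ℝ) < (k:ℝ) + 1 := by positivity
  have hcomp := hLaplace.comp (tendsto_scale ((k:ℝ)+1) hk)
  have h2 := hcomp.const_mul (((k:ℝ)+1)⁻¹)
  have heq : (fun s : ℝ => ((k:ℝ)+1)⁻¹ * ((fun s : ℝ => s * ∑' n : ℕ, p n * Real.exp (-s * n)) ∘ (fun s => ((k:ℝ)+1) * s)) s)
      = (fun s : ℝ => s * ∑' n : ℕ, p n * Real.exp (-s * n) * (Real.exp (-s * n))^k) := by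
    funext s
    simp only [Function.comp_apply]
    have : ∀ n : ℕ, p n * Real.exp (-(((k:ℝ)+1) * s) * n) = p n * Real.exp (-s * n) * (Real.exp (-s * n))^k := by
      intro n
      rw [← Real.exp_nat_mul, mul_assoc, ← Real.exp_add]
      congr 2
      ring
    rw [tsum_congr this]
    field_simp
  rw [heq] at h2
  convert h2 using 2
  rw [div_eq_inv_mul]


lemma summable_weight_cont (p : ℕ → ℝ) (hnonneg : ∀ n, 0 ≤ p n)
    (hsummable : ∀ s : ℝ, 0 < s → Summable (fun n : ℕ => p n * Real.exp (-s * n)))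
    (g : ℝ → ℝ) (hg : ContinuousOn g (Icc (0:ℝ) 1)) (s : ℝ) (hs : 0 < s) :
    Summable (fun n : ℕ => p n * Real.exp (-s * n) * g (Real.exp (-s * n))) := by
  obtain ⟨M, hM⟩ := isCompact_Icc.exists_bound_of_continuousOn hg
  exact summable_weight p hnonneg hsummable g M (fun x hx => hM x hx) s hs
lemma poly_case (p : ℕ → ℝ) (P : ℝ) (hnonneg : ∀ n, 0 ≤ p n)
    (hsummable : ∀ s : ℝ, 0 < s → Summable (fun n : ℕ => p n * Real.exp (-s * n)))
    (hLaplace : Tendsto (fun s : ℝ => s * ∑' n : ℕ, p n * Real.exp (-s * n))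
        (nhdsWithin 0 (Ioi 0)) (nhds P)) (q : Polynomial ℝ) :
    Tendsto (fun s : ℝ => s * ∑' n : ℕ, p n * Real.exp (-s * n) * q.eval (Real.exp (-s * n)))
      (nhdsWithin 0 (Ioi 0)) (nhds (P * ∫ t in (0:ℝ)..1, q.eval t)) := by
  induction q using Polynomial.induction_on' with
  | monomial k a =>
      have h := (monomial_case p P hLaplace k).const_mul a
      have heq : ∀ s : ℝ, a * (s * ∑' n : ℕ, p n * Real.exp (-s * n) * (Real.exp (-s * n))^k)
          = s * ∑' n : ℕ, p n * Real.exp (-s * n) * (Polynomial.monomial k a).eval (Real.exp (-s * n)) := by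
        intro s
        have h2 : (∑' n : ℕ, p n * Real.exp (-s * n) * (Polynomial.monomial k a).eval (Real.exp (-s * n)))
            = a * ∑' n : ℕ, p n * Real.exp (-s * n) * (Real.exp (-s * n))^k := by
          rw [← tsum_mul_left]
          congr 1
          funext n
          simp only [Polynomial.eval_monomial]
          ring
        rw [h2]
        ring
      have hint : (∫ t in (0:ℝ)..1, (Polynomial.monomial k a).eval t) = a / (k+1) := by
        simp only [Polynomial.eval_monomial]
        rw [intervalIntegral.integral_const_mul, integral_pow]
        simp
        ring
      rw [hint]
      have : P * (a / (k+1)) = a * (P / (k+1)) := by ring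
      rw [this]
      exact h.congr heq
  | add q r hq hr =>
      have h := hq.add hr
      have heq : ∀ᶠ s : ℝ in nhdsWithin 0 (Ioi 0),
          (s * ∑' n : ℕ, p n * Real.exp (-s * n) * q.eval (Real.exp (-s * n)))
          + (s * ∑' n : ℕ, p n * Real.exp (-s * n) * r.eval (Real.exp (-s * n)))
          = s * ∑' n : ℕ, p n * Real.exp (-s * n) * (q + r).eval (Real.exp (-s * n)) := by
        filter_upwards [self_mem_nhdsWithin] with s hs
        have hsq := summable_weight_cont p hnonneg hsummable q.eval (q.continuous.continuousOn) s hs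
        have hsr := summable_weight_cont p hnonneg hsummable r.eval (r.continuous.continuousOn) s hs
        have h3 : (∑' n : ℕ, p n * Real.exp (-s * n) * (q + r).eval (Real.exp (-s * n)))
            = (∑' n : ℕ, p n * Real.exp (-s * n) * q.eval (Real.exp (-s * n)))
            + (∑' n : ℕ, p n * Real.exp (-s * n) * r.eval (Real.exp (-s * n))) := by
          rw [← Summable.tsum_add hsq hsr]
          congr 1
          funext n
          simp only [Polynomial.eval_add]
          ring
        rw [h3]
        ring
      have hint : (∫ t in (0:ℝ)..1, (q + r).eval t)
          = (∫ t in (0:ℝ)..1, q.eval t) + (∫ t in (0:ℝ)..1, r.eval t) := by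
        simp only [Polynomial.eval_add]
        exact intervalIntegral.integral_add (q.continuous.intervalIntegrable _ _)
          (r.continuous.intervalIntegrable _ _)
      rw [hint, mul_add]
      exact h.congr' heq

lemma cont_case (p : ℕ → ℝ) (P : ℝ) (hnonneg : ∀ n, 0 ≤ p n) (hP : 0 < P)
    (hsummable : ∀ s : ℝ, 0 < s → Summable (fun n : ℕ => p n * Real.exp (-s * n)))
    (hLaplace : Tendsto (fun s : ℝ => s * ∑' n : ℕ, p n * Real.exp (-s * n))
        (nhdsWithin 0 (Ioi 0)) (nhds P))
    (g : ℝ → ℝ) (hg : ContinuousOn g (Icc (0:ℝ) 1)) :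
    Tendsto (fun s : ℝ => s * ∑' n : ℕ, p n * Real.exp (-s * n) * g (Real.exp (-s * n)))
      (nhdsWithin 0 (Ioi 0)) (nhds (P * ∫ t in (0:ℝ)..1, g t)) := by
  rw [Metric.tendsto_nhds]
  intro ε hε
  have hP1 : (0:ℝ) < P + 1 := by linarith
  set η := ε / (4 * (P + 1)) with hηdef
  have hη : 0 < η := by positivity
  obtain ⟨q, hq⟩ := exists_polynomial_near_of_continuousOn 0 1 g hg η hη
  have hmem : ∀ s : ℝ, 0 < s → ∀ n : ℕ, Real.exp (-s * n) ∈ Icc (0:ℝ) 1 := by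
    intro s hs n
    have h0 : 0 ≤ s * n := mul_nonneg hs.le (Nat.cast_nonneg n)
    exact ⟨(Real.exp_pos _).le, Real.exp_le_one_iff.mpr (by linarith)⟩
  have hev1 : ∀ᶠ s : ℝ in nhdsWithin 0 (Ioi 0),
      dist (s * ∑' n : ℕ, p n * Real.exp (-s * n) * q.eval (Real.exp (-s * n)))
        (P * ∫ t in (0:ℝ)..1, q.eval t) < ε / 4 :=
    (Metric.tendsto_nhds.mp (poly_case p P hnonneg hsummable hLaplace q)) (ε/4) (by positivity)
  have hev2 : ∀ᶠ s : ℝ in nhdsWithin 0 (Ioi 0),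
      dist (s * ∑' n : ℕ, p n * Real.exp (-s * n)) P < 1 :=
    (Metric.tendsto_nhds.mp hLaplace) 1 one_pos
  filter_upwards [hev1, hev2, self_mem_nhdsWithin] with s h1 h2 hs
  rw [Real.dist_eq] at h1 h2 ⊢
  -- summabilities
  have hsg := summable_weight_cont p hnonneg hsummable g hg s hs
  have hsq := summable_weight_cont p hnonneg hsummable q.eval q.continuous.continuousOn s hs
  have hsp := hsummable s hs
  -- bound on tsum difference
  have key : |(∑' n : ℕ, p n * Real.exp (-s * n) * g (Real.exp (-s * n)))
      - (∑' n : ℕ, p n * Real.exp (-s * n) * q.eval (Real.exp (-s * n)))|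
      ≤ η * (∑' n : ℕ, p n * Real.exp (-s * n)) := by
    rw [← Summable.tsum_sub hsg hsq]
    have hb : ∀ n : ℕ, ‖p n * Real.exp (-s * n) * g (Real.exp (-s * n))
        - p n * Real.exp (-s * n) * q.eval (Real.exp (-s * n))‖
        ≤ η * (p n * Real.exp (-s * n)) := by
      intro n
      have h0 : 0 ≤ p n * Real.exp (-s * n) := mul_nonneg (hnonneg n) (Real.exp_pos _).le
      have : p n * Real.exp (-s * n) * g (Real.exp (-s * n))
          - p n * Real.exp (-s * n) * q.eval (Real.exp (-s * n))
          = (p n * Real.exp (-s * n)) * (g (Real.exp (-s * n)) - q.eval (Real.exp (-s * n))) := by ring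
      rw [this, Real.norm_eq_abs, abs_mul, abs_of_nonneg h0]
      have := hq _ (hmem s hs n)
      rw [abs_sub_comm] at this
      calc p n * Real.exp (-s * n) * |g (Real.exp (-s * n)) - q.eval (Real.exp (-s * n))|
          ≤ p n * Real.exp (-s * n) * η := mul_le_mul_of_nonneg_left this.le h0
        _ = η * (p n * Real.exp (-s * n)) := by ring
    calc |∑' n : ℕ, (p n * Real.exp (-s * n) * g (Real.exp (-s * n))
          - p n * Real.exp (-s * n) * q.eval (Real.exp (-s * n)))|
        ≤ ∑' n : ℕ, η * (p n * Real.exp (-s * n)) := by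
          have := norm_tsum_le_tsum_norm (f := fun n : ℕ => p n * Real.exp (-s * n) * g (Real.exp (-s * n))
            - p n * Real.exp (-s * n) * q.eval (Real.exp (-s * n)))
            (Summable.of_nonneg_of_le (fun n => norm_nonneg _) hb (hsp.mul_left η))
          rw [Real.norm_eq_abs] at this
          refine this.trans (Summable.tsum_le_tsum hb ?_ (hsp.mul_left η))
          exact Summable.of_nonneg_of_le (fun n => norm_nonneg _) hb (hsp.mul_left η)
        _ = η * ∑' n : ℕ, p n * Real.exp (-s * n) := tsum_mul_left
  -- bound on integral difference
  have keyI : |(∫ t in (0:ℝ)..1, q.eval t) - (∫ t in (0:ℝ)..1, g t)| ≤ η := by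
    rw [← intervalIntegral.integral_sub (q.continuous.intervalIntegrable _ _)
      (hg.intervalIntegrable_of_Icc zero_le_one)]
    have := intervalIntegral.norm_integral_le_of_norm_le_const
      (C := η) (f := fun t => q.eval t - g t) (a := (0:ℝ)) (b := 1) ?_
    · rw [Real.norm_eq_abs] at this
      simpa using this
    · intro x hx
      rw [uIoc_of_le zero_le_one] at hx
      exact (Real.norm_eq_abs _) ▸ (hq x (Ioc_subset_Icc_self hx)).le
  -- bound s * F s ≤ P + 1
  have hsF : s * (∑' n : ℕ, p n * Real.exp (-s * n)) ≤ P + 1 := by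
    have := abs_lt.mp h2
    linarith [this.2]
  have hsF0 : 0 ≤ ∑' n : ℕ, p n * Real.exp (-s * n) :=
    tsum_nonneg (fun n => mul_nonneg (hnonneg n) (Real.exp_pos _).le)
  -- final estimate
  have e1 : |s * (∑' n : ℕ, p n * Real.exp (-s * n) * g (Real.exp (-s * n)))
      - s * (∑' n : ℕ, p n * Real.exp (-s * n) * q.eval (Real.exp (-s * n)))|
      ≤ η * (P + 1) := by
    rw [← mul_sub, abs_mul, abs_of_pos hs]
    calc s * |(∑' n : ℕ, p n * Real.exp (-s * n) * g (Real.exp (-s * n)))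
        - (∑' n : ℕ, p n * Real.exp (-s * n) * q.eval (Real.exp (-s * n)))|
        ≤ s * (η * ∑' n : ℕ, p n * Real.exp (-s * n)) := mul_le_mul_of_nonneg_left key hs.le
      _ = η * (s * ∑' n : ℕ, p n * Real.exp (-s * n)) := by ring
      _ ≤ η * (P + 1) := mul_le_mul_of_nonneg_left hsF hη.le
  have e3 : |P * (∫ t in (0:ℝ)..1, q.eval t) - P * (∫ t in (0:ℝ)..1, g t)| ≤ η * (P + 1) := by
    rw [← mul_sub, abs_mul, abs_of_pos hP]
    calc P * |(∫ t in (0:ℝ)..1, q.eval t) - (∫ t in (0:ℝ)..1, g t)|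
        ≤ P * η := mul_le_mul_of_nonneg_left keyI hP.le
      _ ≤ η * (P + 1) := by nlinarith
  have hη4 : η * (P + 1) = ε / 4 := by
    field_simp [hηdef]
    have h4 : η * (4 * (P + 1)) = ε := by rw [hηdef]; exact div_mul_cancel₀ ε (mul_pos four_pos hP1).ne'
    linarith
  set A := s * (∑' n : ℕ, p n * Real.exp (-s * n) * g (Real.exp (-s * n))) with hA
  set B := s * (∑' n : ℕ, p n * Real.exp (-s * n) * q.eval (Real.exp (-s * n))) with hB
  set C := P * (∫ t in (0:ℝ)..1, q.eval t) with hC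
  set D := P * (∫ t in (0:ℝ)..1, g t) with hD
  have t1 : |A - D| ≤ |A - C| + |C - D| := abs_sub_le _ _ _
  have t2 : |A - C| ≤ |A - B| + |B - C| := abs_sub_le _ _ _
  rw [hη4] at e1 e3
  linarith


noncomputable def cc : ℝ := Real.exp (-1)

lemma cc_pos : 0 < cc := Real.exp_pos _
lemma cc_lt_one : cc < 1 := Real.exp_lt_one_iff.mpr (by norm_num)

noncomputable def hup (δ t : ℝ) : ℝ := max 0 (min ((t - (cc - δ)) / (cc * δ)) (max t cc)⁻¹)
noncomputable def hlo (δ t : ℝ) : ℝ := max 0 (min ((t - cc) / ((cc + δ) * δ)) (max t cc)⁻¹)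

lemma maxc_pos (t : ℝ) : 0 < max t cc := lt_max_of_lt_right cc_pos

lemma hup_cont (δ : ℝ) : Continuous (hup δ) := by
  apply continuous_const.max
  apply Continuous.min
  · exact (continuous_id.sub continuous_const).div_const _
  · exact (continuous_id.max continuous_const).inv₀ (fun t => (maxc_pos t).ne')

lemma hlo_cont (δ : ℝ) : Continuous (hlo δ) := by
  apply continuous_const.max
  apply Continuous.min
  · exact (continuous_id.sub continuous_const).div_const _
  · exact (continuous_id.max continuous_const).inv₀ (fun t => (maxc_pos t).ne')

lemma hup_nonneg (δ t : ℝ) : 0 ≤ hup δ t := le_max_left _ _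
lemma hlo_nonneg (δ t : ℝ) : 0 ≤ hlo δ t := le_max_left _ _

lemma hup_le (δ t : ℝ) : hup δ t ≤ cc⁻¹ := by
  apply max_le
  · exact inv_nonneg.mpr cc_pos.le
  · exact (min_le_right _ _).trans (inv_anti₀ cc_pos (le_max_right _ _))

lemma hup_eq_inv (δ : ℝ) (hδ : 0 < δ) {t : ℝ} (ht : t ∈ Icc cc 1) : hup δ t = t⁻¹ := by
  have htc : cc ≤ t := ht.1
  have ht0 : 0 < t := lt_of_lt_of_le cc_pos htc
  have hmax : max t cc = t := max_eq_left htc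
  have hc := cc_pos
  have hlin : t⁻¹ ≤ (t - (cc - δ)) / (cc * δ) := by
    rw [inv_eq_one_div, div_le_div_iff₀ ht0 (mul_pos cc_pos hδ)]
    nlinarith
  rw [hup, hmax, min_eq_right hlin, max_eq_right (inv_nonneg.mpr ht0.le)]

lemma hup_eq_zero (δ : ℝ) (hδ : 0 < δ) (hδc : δ < cc) {t : ℝ} (ht : t ≤ cc - δ) : hup δ t = 0 := by
  have : (t - (cc - δ)) / (cc * δ) ≤ 0 := by
    apply div_nonpos_of_nonpos_of_nonneg (by linarith) (mul_pos cc_pos hδ).le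
  rw [hup, max_eq_left ((min_le_left _ _).trans this)]

lemma hlo_eq_zero (δ : ℝ) (hδ : 0 < δ) {t : ℝ} (ht : t < cc) : hlo δ t = 0 := by
  have hc := cc_pos
  have : (t - cc) / ((cc + δ) * δ) ≤ 0 := by
    apply div_nonpos_of_nonpos_of_nonneg (by linarith) (mul_pos (by linarith) hδ).le
  rw [hlo, max_eq_left ((min_le_left _ _).trans this)]

lemma hlo_le_inv (δ : ℝ) {t : ℝ} (ht : cc ≤ t) : hlo δ t ≤ t⁻¹ := by
  have ht0 : 0 < t := lt_of_lt_of_le cc_pos ht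
  apply max_le (inv_nonneg.mpr ht0.le)
  exact (min_le_right _ _).trans (by rw [max_eq_left ht])

lemma hlo_eq_inv (δ : ℝ) (hδ : 0 < δ) {t : ℝ} (ht : cc + δ ≤ t) (ht1 : t ≤ 1) : hlo δ t = t⁻¹ := by
  have hc := cc_pos
  have ht0 : 0 < t := by linarith
  have htc : cc ≤ t := by linarith
  have hmax : max t cc = t := max_eq_left htc
  have hlin : t⁻¹ ≤ (t - cc) / ((cc + δ) * δ) := by
    rw [inv_eq_one_div, div_le_div_iff₀ ht0 (mul_pos (by linarith) hδ)]
    nlinarith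
  rw [hlo, hmax, min_eq_right hlin, max_eq_right (inv_nonneg.mpr ht0.le)]

-- integral bounds
lemma hup_integral (δ : ℝ) (hδ : 0 < δ) (hδc : δ < cc) :
    (∫ t in (0:ℝ)..1, hup δ t) ≤ 1 + δ * cc⁻¹ := by
  have hc := cc_pos
  have hc1 := cc_lt_one
  have hint : ∀ a b : ℝ, IntervalIntegrable (hup δ) MeasureTheory.volume a b :=
    fun a b => (hup_cont δ).intervalIntegrable a b
  have split1 : (∫ t in (0:ℝ)..1, hup δ t)
      = (∫ t in (0:ℝ)..(cc - δ), hup δ t) + (∫ t in (cc - δ)..cc, hup δ t)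
        + (∫ t in cc..1, hup δ t) := by
    rw [intervalIntegral.integral_add_adjacent_intervals (hint _ _) (hint _ _),
      intervalIntegral.integral_add_adjacent_intervals (hint _ _) (hint _ _)]
  have e1 : (∫ t in (0:ℝ)..(cc - δ), hup δ t) = 0 := by
    rw [intervalIntegral.integral_congr (g := fun _ => (0:ℝ)), intervalIntegral.integral_zero]
    intro x hx
    rw [uIcc_of_le (by linarith)] at hx
    exact hup_eq_zero δ hδ hδc hx.2
  have e2 : (∫ t in (cc - δ)..cc, hup δ t) ≤ δ * cc⁻¹ := by
    have hb := intervalIntegral.norm_integral_le_of_norm_le_const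
      (C := cc⁻¹) (f := hup δ) (a := cc - δ) (b := cc) ?_
    · rw [Real.norm_eq_abs] at hb
      have : |cc - (cc - δ)| = δ := by rw [abs_of_nonneg (by linarith)]; ring
      rw [this] at hb
      calc (∫ t in (cc - δ)..cc, hup δ t) ≤ |∫ t in (cc - δ)..cc, hup δ t| := le_abs_self _
        _ ≤ cc⁻¹ * δ := hb
        _ = δ * cc⁻¹ := by ring
    · intro x _
      rw [Real.norm_eq_abs, abs_of_nonneg (hup_nonneg δ x)]
      exact hup_le δ x
  have e3 : (∫ t in cc..1, hup δ t) = 1 := by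
    rw [intervalIntegral.integral_congr (g := fun t => t⁻¹)]
    · rw [integral_inv (by rw [uIcc_of_le hc1.le]; exact fun h => absurd h.1 (by linarith))]
      simp [cc, Real.log_exp]
    · intro x hx
      rw [uIcc_of_le hc1.le] at hx
      exact hup_eq_inv δ hδ hx
  rw [split1, e1]
  linarith

lemma hlo_integral (δ : ℝ) (hδ : 0 < δ) (hδ1 : cc + δ < 1) :
    1 - δ * cc⁻¹ ≤ (∫ t in (0:ℝ)..1, hlo δ t) := by
  have hc := cc_pos
  have hint : ∀ a b : ℝ, IntervalIntegrable (hlo δ) MeasureTheory.volume a b :=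
    fun a b => (hlo_cont δ).intervalIntegrable a b
  have split1 : (∫ t in (0:ℝ)..1, hlo δ t)
      = (∫ t in (0:ℝ)..(cc + δ), hlo δ t) + (∫ t in (cc + δ)..1, hlo δ t) := by
    rw [intervalIntegral.integral_add_adjacent_intervals (hint _ _) (hint _ _)]
  have e1 : 0 ≤ (∫ t in (0:ℝ)..(cc + δ), hlo δ t) :=
    intervalIntegral.integral_nonneg (by linarith) (fun x _ => hlo_nonneg δ x)
  have e2 : (∫ t in (cc + δ)..1, hlo δ t) = Real.log (1 / (cc + δ)) := by
    rw [intervalIntegral.integral_congr (g := fun t => t⁻¹)]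
    · exact integral_inv (by rw [uIcc_of_le hδ1.le]; exact fun h => absurd h.1 (by linarith))
    · intro x hx
      rw [uIcc_of_le hδ1.le] at hx
      exact hlo_eq_inv δ hδ hx.1 hx.2
  have e3 : 1 - δ * cc⁻¹ ≤ Real.log (1 / (cc + δ)) := by
    have hlog : Real.log ((cc + δ) / cc) ≤ (cc + δ) / cc - 1 :=
      Real.log_le_sub_one_of_pos (div_pos (by linarith) hc)
    have hlogc : Real.log cc = -1 := by simp [cc, Real.log_exp]
    rw [Real.log_div (by linarith) hc.ne'] at hlog
    rw [one_div, Real.log_inv]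
    have : (cc + δ) / cc - 1 = δ * cc⁻¹ := by field_simp; ring
    rw [this, hlogc] at hlog
    linarith
  rw [split1]
  linarith

lemma Gtends (p : ℕ → ℝ) (P : ℝ) (hnonneg : ∀ n, 0 ≤ p n) (hP : 0 < P)
    (hsummable : ∀ s : ℝ, 0 < s → Summable (fun n : ℕ => p n * Real.exp (-s * n)))
    (hLaplace : Tendsto (fun s : ℝ => s * ∑' n : ℕ, p n * Real.exp (-s * n))
        (nhdsWithin 0 (Ioi 0)) (nhds P)) :
    Tendsto (fun s : ℝ => s * ∑ j ∈ Finset.range (Nat.floor (1/s) + 1), p j)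
      (nhdsWithin 0 (Ioi 0)) (nhds P) := by
  rw [Metric.tendsto_nhds]
  intro ε hε
  have hc := cc_pos
  have hc1 := cc_lt_one
  set δ := min (cc/2) (min ((1-cc)/2) (ε * cc/(4*(P+1)))) with hδdef
  have hδ : 0 < δ :=
    lt_min (by linarith) (lt_min (by linarith) (div_pos (mul_pos hε hc) (by linarith)))
  have hδc : δ < cc := (min_le_left _ _).trans_lt (by linarith)
  have hδ1 : cc + δ < 1 := by
    have h : δ ≤ min ((1-cc)/2) (ε * cc/(4*(P+1))) := min_le_right _ _
    have h' : min ((1-cc)/2) (ε * cc/(4*(P+1))) ≤ (1-cc)/2 := min_le_left _ _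
    linarith
  have hδε : P * (δ * cc⁻¹) ≤ ε/4 := by
    have h1 : δ ≤ ε * cc/(4*(P+1)) := (min_le_right _ _).trans (min_le_right _ _)
    have h2 : δ * cc⁻¹ ≤ ε/(4*(P+1)) := by
      have := mul_le_mul_of_nonneg_right h1 (inv_nonneg.mpr hc.le)
      calc δ * cc⁻¹ ≤ ε * cc/(4*(P+1)) * cc⁻¹ := this
        _ = ε/(4*(P+1)) := by field_simp
    have h3 := mul_le_mul_of_nonneg_left h2 hP.le
    calc P * (δ * cc⁻¹) ≤ P * (ε/(4*(P+1))) := h3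
      _ ≤ ε/4 := by
        have h4 : P * (ε / (4 * (P + 1))) = P * ε / (4 * (P + 1)) := by ring
        rw [h4, div_le_div_iff₀ (by linarith) (by norm_num)]
        nlinarith
  have Hup := cont_case p P hnonneg hP hsummable hLaplace (hup δ) (hup_cont δ).continuousOn
  have Hlo := cont_case p P hnonneg hP hsummable hLaplace (hlo δ) (hlo_cont δ).continuousOn
  have hIup : P * (∫ t in (0:ℝ)..1, hup δ t) ≤ P + ε/4 := by
    have := mul_le_mul_of_nonneg_left (hup_integral δ hδ hδc) hP.le
    calc P * (∫ t in (0:ℝ)..1, hup δ t) ≤ P * (1 + δ * cc⁻¹) := this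
      _ = P + P * (δ * cc⁻¹) := by ring
      _ ≤ P + ε/4 := by linarith
  have hIlo : P - ε/4 ≤ P * (∫ t in (0:ℝ)..1, hlo δ t) := by
    have := mul_le_mul_of_nonneg_left (hlo_integral δ hδ hδ1) hP.le
    calc P - ε/4 ≤ P * (1 - δ * cc⁻¹) := by nlinarith
      _ ≤ P * (∫ t in (0:ℝ)..1, hlo δ t) := this
  have ev1 := (Metric.tendsto_nhds.mp Hup) (ε/4) (by positivity)
  have ev2 := (Metric.tendsto_nhds.mp Hlo) (ε/4) (by positivity)
  filter_upwards [ev1, ev2, self_mem_nhdsWithin] with s h1 h2 hs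
  rw [Real.dist_eq] at h1 h2 ⊢
  have hs' : (0:ℝ) < s := hs
  have h1s : (0:ℝ) ≤ 1/s := by positivity
  have hin : ∀ j ∈ Finset.range (Nat.floor (1/s) + 1), Real.exp (-s * j) ∈ Icc cc 1 := by
    intro j hj
    rw [Finset.mem_range, Nat.lt_succ_iff] at hj
    have hj' : (j:ℝ) ≤ 1/s := (Nat.le_floor_iff h1s).mp hj
    have hsj : s * j ≤ 1 := by
      rw [mul_comm]
      exact (le_div_iff₀ hs').mp hj'
    have hsj0 : 0 ≤ s * j := mul_nonneg hs'.le (Nat.cast_nonneg j)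
    constructor
    · rw [cc]
      exact Real.exp_le_exp.mpr (by linarith)
    · exact Real.exp_le_one_iff.mpr (by linarith)
  have up_bound : (∑ j ∈ Finset.range (Nat.floor (1/s) + 1), p j)
      ≤ ∑' n : ℕ, p n * Real.exp (-s * n) * hup δ (Real.exp (-s * n)) := by
    have heq : (∑ j ∈ Finset.range (Nat.floor (1/s) + 1), p j)
        = ∑ j ∈ Finset.range (Nat.floor (1/s) + 1),
            p j * Real.exp (-s * j) * hup δ (Real.exp (-s * j)) := by
      apply Finset.sum_congr rfl
      intro j hj
      rw [hup_eq_inv δ hδ (hin j hj), mul_assoc, mul_inv_cancel₀ (Real.exp_pos _).ne', mul_one]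
    rw [heq]
    exact Summable.sum_le_tsum _
      (fun j _ => mul_nonneg (mul_nonneg (hnonneg j) (Real.exp_pos _).le) (hup_nonneg δ _))
      (summable_weight_cont p hnonneg hsummable (hup δ) (hup_cont δ).continuousOn s hs')
  have lo_bound : (∑' n : ℕ, p n * Real.exp (-s * n) * hlo δ (Real.exp (-s * n)))
      ≤ ∑ j ∈ Finset.range (Nat.floor (1/s) + 1), p j := by
    rw [tsum_eq_sum (s := Finset.range (Nat.floor (1/s) + 1)) ?_]
    · apply Finset.sum_le_sum
      intro j hj
      have hmem := hin j hj
      have h0 : 0 ≤ p j * Real.exp (-s * j) :=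
        mul_nonneg (hnonneg j) (Real.exp_pos _).le
      calc p j * Real.exp (-s * j) * hlo δ (Real.exp (-s * j))
          ≤ p j * Real.exp (-s * j) * (Real.exp (-s * j))⁻¹ :=
            mul_le_mul_of_nonneg_left (hlo_le_inv δ hmem.1) h0
        _ = p j := by rw [mul_assoc, mul_inv_cancel₀ (Real.exp_pos _).ne', mul_one]
    · intro j hj
      rw [Finset.mem_range, Nat.lt_succ_iff, not_le] at hj
      have hj' : 1/s < (j:ℝ) := by
        calc 1/s < (Nat.floor (1/s) : ℝ) + 1 := Nat.lt_floor_add_one _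
          _ ≤ (j:ℝ) := by exact_mod_cast Nat.succ_le_of_lt hj
      have hsj : 1 < s * j := by
        rw [mul_comm]
        exact (div_lt_iff₀ hs').mp hj'
      have : Real.exp (-s * j) < cc := by
        rw [cc]
        exact Real.exp_lt_exp.mpr (by linarith)
      rw [hlo_eq_zero δ hδ this, mul_zero]
  have habs1 := abs_lt.mp h1
  have habs2 := abs_lt.mp h2
  have up2 := mul_le_mul_of_nonneg_left up_bound hs'.le
  have lo2 := mul_le_mul_of_nonneg_left lo_bound hs'.le
  rw [abs_lt]
  constructor <;> [linarith [habs2.1, lo2, hIlo]; linarith [habs1.2, up2, hIup]]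

theorem tauberian_cesaro (p : ℕ → ℝ) (hnonneg : ∀ n, 0 ≤ p n) (P : ℝ) (hP : 0 < P)
    (hsummable : ∀ s : ℝ, 0 < s → Summable (fun n : ℕ => p n * Real.exp (-s * n)))
    (hLaplace :
      Tendsto (fun s : ℝ => s * ∑' n : ℕ, p n * Real.exp (-s * n))
        (nhdsWithin 0 (Ioi 0)) (nhds P)) :
    Tendsto (fun n : ℕ => (∑ j ∈ Finset.range (n + 1), p j) / n) atTop (nhds P) := by
  have G := Gtends p P hnonneg hP hsummable hLaplace
  have hnat : Tendsto (fun n : ℕ => ((n:ℝ))⁻¹) atTop (nhdsWithin 0 (Ioi 0)) := by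
    rw [tendsto_nhdsWithin_iff]
    constructor
    · exact tendsto_inv_atTop_zero.comp tendsto_natCast_atTop_atTop
    · filter_upwards [eventually_ge_atTop 1] with n hn
      exact inv_pos.mpr ((Nat.cast_pos (α := ℝ)).mpr hn)
  apply (G.comp hnat).congr'
  filter_upwards [eventually_ge_atTop 1] with n hn
  have hn' : (0:ℝ) < n := Nat.cast_pos.mpr hn
  simp only [Function.comp_apply]
  rw [one_div, inv_inv, Nat.floor_natCast, div_eq_mul_inv, mul_comm]
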